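/- The 6×6 matrix A with rows (0,0,0,0,1,0), (0,0,0,0,1,1), (1,1,0,0,0,0), (0,1,0,0,0,0), (0,0,1,1,0,0), (0,0,1,0,0,0) satisfies: A^3 is block diagonal with three 2×2 blocks, each block being one of [[1,2],[2,3]], [[3,2],[2,1]], [[3,2],[2,1]], and the characteristic polynomial of each 2×2 block is x^2 − 4x − 1, so each block has eigenvalues 2 + √5 and 2 − √5. -/
import Mathlib


open Polynomial

/-- The cube of the shape-transition adjacency matrix for rank 3, level 2 is block
diagonal with 2×2 blocks whose characteristic polynomial is `x² − 4x − 1`,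
with eigenvalues `2 ± √5`. -/
theorem shape_transition_r3_l2 (A : Matrix (Fin 6) (Fin 6) ℝ)
    (hA : A = !![0,0,0,0,1,0; 0,0,0,0,1,1; 1,1,0,0,0,0; 0,1,0,0,0,0; 0,0,1,1,0,0; 0,0,1,0,0,0]) :
    A ^ 3 = !![1,2,0,0,0,0; 2,3,0,0,0,0; 0,0,3,2,0,0; 0,0,2,1,0,0; 0,0,0,0,3,2; 0,0,0,0,2,1]
    ∧ Matrix.charpoly (!![1,2; 2,3] : Matrix (Fin 2) (Fin 2) ℝ) = X ^ 2 - 4 * X - 1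
    ∧ Matrix.charpoly (!![3,2; 2,1] : Matrix (Fin 2) (Fin 2) ℝ) = X ^ 2 - 4 * X - 1
    ∧ (X ^ 2 - 4 * X - 1 : Polynomial ℝ).IsRoot (2 + Real.sqrt 5)
    ∧ (X ^ 2 - 4 * X - 1 : Polynomial ℝ).IsRoot (2 - Real.sqrt 5) := by
  have h5 : Real.sqrt 5 ^ 2 = 5 := Real.sq_sqrt (by norm_num)
  refine ⟨?_, ?_, ?_, ?_, ?_⟩
  · subst hA
    have h2 : (!![0,0,0,0,1,0; 0,0,0,0,1,1; 1,1,0,0,0,0; 0,1,0,0,0,0; 0,0,1,1,0,0; 0,0,1,0,0,0] : Matrix (Fin 6) (Fin 6) ℝ) * !![0,0,0,0,1,0; 0,0,0,0,1,1; 1,1,0,0,0,0; 0,1,0,0,0,0; 0,0,1,1,0,0; 0,0,1,0,0,0] = !![0,0,1,1,0,0; 0,0,2,1,0,0; 0,0,0,0,2,1; 0,0,0,0,1,1; 1,2,0,0,0,0; 1,1,0,0,0,0] := by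
      ext i j
      fin_cases i <;> fin_cases j <;>
        norm_num [Matrix.mul_apply, Fin.sum_univ_succ, Matrix.cons_val_zero, Matrix.cons_val_succ]
    rw [pow_succ, pow_two, h2]
    ext i j
    fin_cases i <;> fin_cases j <;>
      norm_num [Matrix.mul_apply, Fin.sum_univ_succ, Matrix.cons_val_zero, Matrix.cons_val_succ]
  · rw [Matrix.charpoly, Matrix.det_fin_two]
    simp [Matrix.charmatrix_apply_eq, Matrix.charmatrix_apply_ne, map_ofNat]
    ring
  · rw [Matrix.charpoly, Matrix.det_fin_two]
    simp [Matrix.charmatrix_apply_eq, Matrix.charmatrix_apply_ne, map_ofNat]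
    ring
  · simp [IsRoot]; nlinarith [h5]
  · simp [IsRoot]; nlinarith [h5]
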